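/- For a network with general bilinear layers F_k(x,Z_k) = σ_k(C_k(F_{k-1}, W_k) + ι_k(b_k)) and a differentiable loss ℓ, the Fréchet-Riesz gradient with respect to W_k is D_{W_k}ℓ(y,F_n(x,Z_n)) = S_k* ∘ T_{k+1}* ∘ ⋯ ∘ T_n*(L(y,F_n)), where T_j(h) = D_j ⊙ C_j(h, W_j), S_k(H) = D_k ⊙ C_k(F_{k-1}, H), D_j = σ_j'(C_j(F_{j-1},W_j) + ι_j(b_j)), L(y,t) is the vector of partials ∂ℓ(y,t)/∂t_i, and * denotes Hilbert-space adjoint. -/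

import Mathlib

/-- Pointwise (Hadamard) product on `ℝ^I`. -/
def had {m : ℕ} (a c : EuclideanSpace ℝ (Fin m)) : EuclideanSpace ℝ (Fin m) :=
  WithLp.toLp 2 (fun i => a i * c i)

section Aux

/-- Hadamard multiplication by a fixed vector, as a continuous linear map. -/
noncomputable def hadCLM {p : ℕ} (a : EuclideanSpace ℝ (Fin p)) :
    EuclideanSpace ℝ (Fin p) →L[ℝ] EuclideanSpace ℝ (Fin p) :=
  LinearMap.toContinuousLinearMap
    { toFun := fun c => had a c
      map_add' := by intro c d; ext i; simp [had]; ring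
      map_smul' := by intro r c; ext i; simp [had]; ring }

@[simp] lemma hadCLM_apply {p : ℕ} (a c : EuclideanSpace ℝ (Fin p)) :
    hadCLM a c = had a c := rfl

lemma hasFDerivAt_coordwise {p : ℕ} (s : ℝ → ℝ) (hs : Differentiable ℝ s)
    (w0 : EuclideanSpace ℝ (Fin p)) :
    HasFDerivAt (𝕜 := ℝ) (F := EuclideanSpace ℝ (Fin p))
      (fun w : EuclideanSpace ℝ (Fin p) => WithLp.toLp 2 (fun i => s (w i)))
      (hadCLM (WithLp.toLp 2 (fun i => deriv s (w0 i)))) w0 := by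
  have hcoord : ∀ i : Fin p, HasFDerivAt (fun w : EuclideanSpace ℝ (Fin p) => s (w i))
      (deriv s (w0 i) • (EuclideanSpace.proj i (𝕜 := ℝ))) w0 := fun i =>
    ((hs (w0 i)).hasDerivAt).comp_hasFDerivAt w0 (EuclideanSpace.proj i (𝕜 := ℝ)).hasFDerivAt
  have hg : HasFDerivAt (fun (w : EuclideanSpace ℝ (Fin p)) (i : Fin p) => s (w i))
      (ContinuousLinearMap.pi (fun i => deriv s (w0 i) • EuclideanSpace.proj i (𝕜 := ℝ))) w0 :=
    hasFDerivAt_pi.mpr hcoord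
  have eCLM := ((PiLp.continuousLinearEquiv 2 ℝ (fun _ : Fin p => ℝ)).symm :
    (Fin p → ℝ) →L[ℝ] EuclideanSpace ℝ (Fin p))
  set E := ((PiLp.continuousLinearEquiv 2 ℝ (fun _ : Fin p => ℝ)).symm :
    (Fin p → ℝ) →L[ℝ] EuclideanSpace ℝ (Fin p)) with hE
  have hcomp := E.hasFDerivAt.comp w0 hg
  have heq : hadCLM (WithLp.toLp 2 (fun i => deriv s (w0 i))) =
      E.comp (ContinuousLinearMap.pi (fun i => deriv s (w0 i) • EuclideanSpace.proj i (𝕜 := ℝ))) := by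
    apply ContinuousLinearMap.ext
    intro v
    ext i
    simp [hE, hadCLM, had]
  rw [heq]
  exact hcomp

lemma hasFDerivAt_layer {p : ℕ} {E : Type*} [NormedAddCommGroup E] [NormedSpace ℝ E]
    (A : E →L[ℝ] EuclideanSpace ℝ (Fin p)) (c : EuclideanSpace ℝ (Fin p))
    (s : ℝ → ℝ) (hs : Differentiable ℝ s) (u : E) :
    HasFDerivAt (𝕜 := ℝ) (F := EuclideanSpace ℝ (Fin p))
      (fun v : E => WithLp.toLp 2 (fun i => s ((A v + c) i)))
      ((hadCLM (WithLp.toLp 2 (fun i => deriv s ((A u + c) i)))).comp A) u := by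
  have h1 : HasFDerivAt (fun v : E => A v + c) A u := A.hasFDerivAt.add_const c
  exact (hasFDerivAt_coordwise s hs (A u + c)).comp u h1

end Aux

variable (I : ℕ → ℕ) (J : ℕ → ℕ) (K : ℕ → ℕ)

/-- Activations of a network with general bilinear layers:
`F_0 x = x`, `F_{k+1} x = σ_k(C_k(F_k x, W_k) + ι_k(b_k))` (0-indexed). -/
noncomputable def genNetF
    (C : ∀ k : ℕ, EuclideanSpace ℝ (Fin (I k)) →ₗ[ℝ]
      EuclideanSpace ℝ (Fin (J k)) →ₗ[ℝ] EuclideanSpace ℝ (Fin (I (k + 1))))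
    (ι : ∀ k : ℕ, EuclideanSpace ℝ (Fin (K k)) →ₗ[ℝ] EuclideanSpace ℝ (Fin (I (k + 1))))
    (W : ∀ k : ℕ, EuclideanSpace ℝ (Fin (J k)))
    (b : ∀ k : ℕ, EuclideanSpace ℝ (Fin (K k)))
    (σ : ℕ → ℝ → ℝ) (x : EuclideanSpace ℝ (Fin (I 0))) :
    (k : ℕ) → EuclideanSpace ℝ (Fin (I k))
  | 0 => x
  | k + 1 => WithLp.toLp 2 (fun i => σ k ((C k (genNetF C ι W b σ x k) (W k) + ι k (b k)) i))

/-- The coordinatewise derivative vector `D_k = σ_k'(C_k(F_k, W_k) + ι_k(b_k))`. -/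
noncomputable def genDvec
    (C : ∀ k : ℕ, EuclideanSpace ℝ (Fin (I k)) →ₗ[ℝ]
      EuclideanSpace ℝ (Fin (J k)) →ₗ[ℝ] EuclideanSpace ℝ (Fin (I (k + 1))))
    (ι : ∀ k : ℕ, EuclideanSpace ℝ (Fin (K k)) →ₗ[ℝ] EuclideanSpace ℝ (Fin (I (k + 1))))
    (W : ∀ k : ℕ, EuclideanSpace ℝ (Fin (J k)))
    (b : ∀ k : ℕ, EuclideanSpace ℝ (Fin (K k)))
    (σ : ℕ → ℝ → ℝ) (x : EuclideanSpace ℝ (Fin (I 0))) (k : ℕ) :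
    EuclideanSpace ℝ (Fin (I (k + 1))) :=
  WithLp.toLp 2 (fun i => deriv (σ k) ((C k (genNetF I J K C ι W b σ x k) (W k) + ι k (b k)) i))

/-- The composition of adjoints `T_{k+1}* ∘ ⋯ ∘ T_{k+m}*` (identity for `m = 0`). -/
noncomputable def adjComp
    (T : ∀ j : ℕ, EuclideanSpace ℝ (Fin (I j)) →L[ℝ] EuclideanSpace ℝ (Fin (I (j + 1))))
    (k : ℕ) : (m : ℕ) →
      (EuclideanSpace ℝ (Fin (I (k + 1 + m))) →L[ℝ] EuclideanSpace ℝ (Fin (I (k + 1))))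
  | 0 => ContinuousLinearMap.id ℝ _
  | m + 1 => (adjComp T k m).comp (ContinuousLinearMap.adjoint (T (k + 1 + m)))

section Fwd

variable
    (C : ∀ k : ℕ, EuclideanSpace ℝ (Fin (I k)) →ₗ[ℝ]
      EuclideanSpace ℝ (Fin (J k)) →ₗ[ℝ] EuclideanSpace ℝ (Fin (I (k + 1))))
    (ι : ∀ k : ℕ, EuclideanSpace ℝ (Fin (K k)) →ₗ[ℝ] EuclideanSpace ℝ (Fin (I (k + 1))))
    (W : ∀ k : ℕ, EuclideanSpace ℝ (Fin (J k)))
    (b : ∀ k : ℕ, EuclideanSpace ℝ (Fin (K k)))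
    (σ : ℕ → ℝ → ℝ) (x : EuclideanSpace ℝ (Fin (I 0)))

/-- Forward composition `T_{k+m} ∘ ⋯ ∘ T_{k+1} ∘ S`. -/
noncomputable def fwdComp
    (T : ∀ j : ℕ, EuclideanSpace ℝ (Fin (I j)) →L[ℝ] EuclideanSpace ℝ (Fin (I (j + 1))))
    (k : ℕ) (S : EuclideanSpace ℝ (Fin (J k)) →L[ℝ] EuclideanSpace ℝ (Fin (I (k + 1)))) :
    (m : ℕ) → (EuclideanSpace ℝ (Fin (J k)) →L[ℝ] EuclideanSpace ℝ (Fin (I (k + 1 + m))))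
  | 0 => S
  | m + 1 => (T (k + 1 + m)).comp (fwdComp T k S m)

lemma adjoint_fwdComp
    (T : ∀ j : ℕ, EuclideanSpace ℝ (Fin (I j)) →L[ℝ] EuclideanSpace ℝ (Fin (I (j + 1))))
    (k : ℕ) (S : EuclideanSpace ℝ (Fin (J k)) →L[ℝ] EuclideanSpace ℝ (Fin (I (k + 1))))
    (m : ℕ) :
    ContinuousLinearMap.adjoint (fwdComp I J T k S m)
      = (ContinuousLinearMap.adjoint S).comp (adjComp I T k m) := by
  induction m with
  | zero => simp [fwdComp, adjComp]
  | succ m ih =>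
    rw [fwdComp, ContinuousLinearMap.adjoint_comp, ih, adjComp, ContinuousLinearMap.comp_assoc]

/-- Layers below `k` don't depend on an update of `W` at `k`. -/
lemma genNetF_update_le (k : ℕ) (H : EuclideanSpace ℝ (Fin (J k))) :
    ∀ j : ℕ, j ≤ k →
      genNetF I J K C ι (Function.update W k H) b σ x j = genNetF I J K C ι W b σ x j := by
  intro j
  induction j with
  | zero => intro _; rfl
  | succ j ih =>
    intro hj
    have hjk : j ≠ k := by omega
    rw [genNetF, genNetF, ih (by omega), Function.update_of_ne hjk]

/-- The key forward-derivative computation. -/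
lemma genNetF_hasFDerivAt
    (hσ : ∀ j, Differentiable ℝ (σ j)) (k : ℕ)
    (T : ∀ j : ℕ, EuclideanSpace ℝ (Fin (I j)) →L[ℝ] EuclideanSpace ℝ (Fin (I (j + 1))))
    (hT : ∀ j (h : EuclideanSpace ℝ (Fin (I j))),
      T j h = had (genDvec I J K C ι W b σ x j) (C j h (W j)))
    (S : EuclideanSpace ℝ (Fin (J k)) →L[ℝ] EuclideanSpace ℝ (Fin (I (k + 1))))
    (hS : ∀ H : EuclideanSpace ℝ (Fin (J k)),
      S H = had (genDvec I J K C ι W b σ x k) (C k (genNetF I J K C ι W b σ x k) H))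
    (m : ℕ) :
    HasFDerivAt
      (fun H : EuclideanSpace ℝ (Fin (J k)) =>
        genNetF I J K C ι (Function.update W k H) b σ x (k + 1 + m))
      (fwdComp I J T k S m) (W k) := by
  induction m with
  | zero =>
    have hfun : (fun H : EuclideanSpace ℝ (Fin (J k)) =>
        genNetF I J K C ι (Function.update W k H) b σ x (k + 1)) =
        (fun H => WithLp.toLp 2 (fun i => σ k
          (((C k (genNetF I J K C ι W b σ x k)).toContinuousLinearMap H + ι k (b k)) i)) :
          EuclideanSpace ℝ (Fin (J k)) → EuclideanSpace ℝ (Fin (I (k + 1)))) := by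
      funext H
      rw [genNetF, genNetF_update_le I J K C ι W b σ x k H k le_rfl, Function.update_self]
      rfl
    have hkey := hasFDerivAt_layer ((C k (genNetF I J K C ι W b σ x k)).toContinuousLinearMap)
      (ι k (b k)) (σ k) (hσ k) (W k)
    have hSeq : ((hadCLM (WithLp.toLp 2 (fun i => deriv (σ k)
        (((C k (genNetF I J K C ι W b σ x k)).toContinuousLinearMap (W k) + ι k (b k)) i)))).comp
        ((C k (genNetF I J K C ι W b σ x k)).toContinuousLinearMap)) = S := by
      apply ContinuousLinearMap.ext
      intro v
      rw [hS]
      ext i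
      simp [had, genDvec]
    show HasFDerivAt (fun H : EuclideanSpace ℝ (Fin (J k)) =>
        genNetF I J K C ι (Function.update W k H) b σ x (k + 1)) S (W k)
    rw [hfun, ← hSeq]
    exact hkey
  | succ m ih =>
    set j := k + 1 + m with hj
    have hkey := hasFDerivAt_layer ((((C j).flip) (W j)).toContinuousLinearMap)
      (ι j (b j)) (σ j) (hσ j) (genNetF I J K C ι W b σ x j)
    have hTeq : ((hadCLM (WithLp.toLp 2 (fun i => deriv (σ j)
        (((((C j).flip) (W j)).toContinuousLinearMap (genNetF I J K C ι W b σ x j)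
          + ι j (b j)) i)))).comp
        ((((C j).flip) (W j)).toContinuousLinearMap)) = T j := by
      apply ContinuousLinearMap.ext
      intro v
      rw [hT]
      ext i
      simp [had, genDvec, LinearMap.flip_apply]
    rw [hTeq] at hkey
    have hL : HasFDerivAt (𝕜 := ℝ) (F := EuclideanSpace ℝ (Fin (I (j + 1))))
        (fun u : EuclideanSpace ℝ (Fin (I j)) =>
          WithLp.toLp 2 (fun i => σ j ((((((C j).flip) (W j)).toContinuousLinearMap) u + ι j (b j)) i)))
        (T j)
        ((fun H : EuclideanSpace ℝ (Fin (J k)) =>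
          genNetF I J K C ι (Function.update W k H) b σ x j) (W k)) := by
      rw [show (fun H : EuclideanSpace ℝ (Fin (J k)) =>
          genNetF I J K C ι (Function.update W k H) b σ x j) (W k)
          = genNetF I J K C ι W b σ x j from by
        show genNetF I J K C ι (Function.update W k (W k)) b σ x j = _
        rw [Function.update_eq_self]]
      exact hkey
    have hcomp := hL.comp (W k) ih
    have hfun : (fun H : EuclideanSpace ℝ (Fin (J k)) =>
        genNetF I J K C ι (Function.update W k H) b σ x (j + 1)) =
        ((fun u : EuclideanSpace ℝ (Fin (I j)) =>
          WithLp.toLp 2 (fun i => σ j ((((((C j).flip) (W j)).toContinuousLinearMap) u + ι j (b j)) i))) :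
          EuclideanSpace ℝ (Fin (I j)) → EuclideanSpace ℝ (Fin (I (j + 1)))) ∘
        (fun H : EuclideanSpace ℝ (Fin (J k)) =>
          genNetF I J K C ι (Function.update W k H) b σ x j) := by
      funext H
      have hjk : j ≠ k := by omega
      show genNetF I J K C ι (Function.update W k H) b σ x (j + 1) = _
      rw [genNetF, Function.update_of_ne hjk]
      rfl
    show HasFDerivAt (fun H : EuclideanSpace ℝ (Fin (J k)) =>
        genNetF I J K C ι (Function.update W k H) b σ x (j + 1))
      ((T j).comp (fwdComp I J T k S m)) (W k)
    rw [hfun]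
    exact hcomp

end Fwd

/-- For a network with general bilinear layers and a differentiable loss, the
Fréchet–Riesz gradient with respect to `W_k` is
`S_k* (T_{k+1}* ∘ ⋯ ∘ T_{n-1}* (L(y, F_n)))` with `n = k+1+m`, where
`T_j h = D_j ⊙ C_j(h, W_j)`, `S_k H = D_k ⊙ C_k(F_k, H)`,
`D_j = σ_j'(C_j(F_j, W_j) + ι_j(b_j))`, and `L(y, ·)` is the gradient of the loss
in its second argument. -/
theorem gen_nn_loss_weight_gradient
    (C : ∀ k : ℕ, EuclideanSpace ℝ (Fin (I k)) →ₗ[ℝ]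
      EuclideanSpace ℝ (Fin (J k)) →ₗ[ℝ] EuclideanSpace ℝ (Fin (I (k + 1))))
    (ι : ∀ k : ℕ, EuclideanSpace ℝ (Fin (K k)) →ₗ[ℝ] EuclideanSpace ℝ (Fin (I (k + 1))))
    (W : ∀ k : ℕ, EuclideanSpace ℝ (Fin (J k)))
    (b : ∀ k : ℕ, EuclideanSpace ℝ (Fin (K k)))
    (σ : ℕ → ℝ → ℝ) (hσ : ∀ j, Differentiable ℝ (σ j))
    (x : EuclideanSpace ℝ (Fin (I 0))) (k m : ℕ)
    (T : ∀ j : ℕ, EuclideanSpace ℝ (Fin (I j)) →L[ℝ] EuclideanSpace ℝ (Fin (I (j + 1))))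
    (hT : ∀ j (h : EuclideanSpace ℝ (Fin (I j))),
      T j h = had (genDvec I J K C ι W b σ x j) (C j h (W j)))
    (S : EuclideanSpace ℝ (Fin (J k)) →L[ℝ] EuclideanSpace ℝ (Fin (I (k + 1))))
    (hS : ∀ H : EuclideanSpace ℝ (Fin (J k)),
      S H = had (genDvec I J K C ι W b σ x k) (C k (genNetF I J K C ι W b σ x k) H))
    (ℓ : EuclideanSpace ℝ (Fin (I (k + 1 + m))) → EuclideanSpace ℝ (Fin (I (k + 1 + m))) → ℝ)
    (y : EuclideanSpace ℝ (Fin (I (k + 1 + m))))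
    (hℓ : DifferentiableAt ℝ (ℓ y) (genNetF I J K C ι W b σ x (k + 1 + m))) :
    HasGradientAt
      (fun H : EuclideanSpace ℝ (Fin (J k)) =>
        ℓ y (genNetF I J K C ι (Function.update W k H) b σ x (k + 1 + m)))
      (ContinuousLinearMap.adjoint S
        (adjComp I T k m (gradient (ℓ y) (genNetF I J K C ι W b σ x (k + 1 + m)))))
      (W k) := by
  set Fn := genNetF I J K C ι W b σ x (k + 1 + m) with hFn
  set g0 := gradient (ℓ y) Fn with hg0
  have hnet := genNetF_hasFDerivAt I J K C ι W b σ x hσ k T hT S hS m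
  have hgrad : HasGradientAt (ℓ y) g0 Fn := hℓ.hasGradientAt
  have hfd : HasFDerivAt (ℓ y) (InnerProductSpace.toDual ℝ _ g0) Fn :=
    hasGradientAt_iff_hasFDerivAt.1 hgrad
  have hfd' : HasFDerivAt (ℓ y) (InnerProductSpace.toDual ℝ _ g0)
      ((fun H : EuclideanSpace ℝ (Fin (J k)) =>
        genNetF I J K C ι (Function.update W k H) b σ x (k + 1 + m)) (W k)) := by
    rw [show (fun H : EuclideanSpace ℝ (Fin (J k)) =>
        genNetF I J K C ι (Function.update W k H) b σ x (k + 1 + m)) (W k) = Fn from by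
      show genNetF I J K C ι (Function.update W k (W k)) b σ x (k + 1 + m) = Fn
      rw [Function.update_eq_self, hFn]]
    exact hfd
  have hcomp := hfd'.comp (W k) hnet
  rw [hasGradientAt_iff_hasFDerivAt]
  refine hcomp.congr_fderiv ?_
  have hadj : ContinuousLinearMap.adjoint S (adjComp I T k m g0)
      = ContinuousLinearMap.adjoint (fwdComp I J T k S m) g0 := by
    rw [adjoint_fwdComp]; rfl
  rw [hadj]
  ext v
  rw [InnerProductSpace.toDual_apply_apply]
  rw [ContinuousLinearMap.adjoint_inner_left]
  rfl
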